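/- Let X : [0,∞) → ℝ be locally Hölder continuous with exponent γ ∈ [1/2, 1], and for r < X_0 let τ_r = inf{t ≥ 0 : B_t ≥ X_t} be the first hitting time of the curve X by a Brownian motion started at r. Then for every s > 0, P_r(τ_r > s) → 0 as r → X_0⁻. -/

import Mathlib

open MeasureTheory ProbabilityTheory Set Filter

/-- A standard Brownian motion started at `0`. -/
structure IsBrownianMotion {Ω : Type*} [MeasurableSpace Ω] (P : Measure Ω)
    (B : ℝ → Ω → ℝ) : Prop where
  isProb : IsProbabilityMeasure P
  start : ∀ᵐ ω ∂P, B 0 ω = 0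
  cont : ∀ᵐ ω ∂P, Continuous fun t => B t ω
  meas : ∀ t, Measurable (B t)
  incr : ∀ s t : ℝ, 0 ≤ s → s ≤ t →
    P.map (fun ω => B t ω - B s ω) = gaussianReal 0 (Real.toNNReal (t - s))
  indep : ∀ (n : ℕ) (ts : Fin (n + 1) → ℝ), Monotone ts → (∀ i, 0 ≤ ts i) →
    iIndepFun
      (fun i : Fin n => fun ω => B (ts i.succ) ω - B (ts i.castSucc) ω) P

section Aux
open MeasureTheory ProbabilityTheory Set Filter

lemma aux_gauss_scale (v : NNReal) (hv : v ≠ 0) (a : ℝ) :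
    gaussianReal 0 v (Set.Ici a) = gaussianReal 0 1 (Set.Ici (a / Real.sqrt v)) := by
  have hv0 : (0:ℝ) < Real.sqrt v := Real.sqrt_pos.2 (by exact_mod_cast pos_iff_ne_zero.mpr hv)
  have hmap := gaussianReal_map_const_mul (μ := 0) (v := 1) (Real.sqrt v)
  have hv2 : (NNReal.mk ((Real.sqrt v)^2) (sq_nonneg _) * 1 : NNReal) = v := by
    apply NNReal.eq; simp [Real.sq_sqrt v.2]
  rw [hv2, mul_zero] at hmap
  rw [← hmap, Measure.map_apply (measurable_const_mul _) measurableSet_Ici]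
  congr 1
  ext x
  simp only [Set.mem_preimage, Set.mem_Ici]
  rw [div_le_iff₀ hv0, mul_comm]

lemma aux_gauss_neg (v : NNReal) (a : ℝ) :
    gaussianReal 0 v (Set.Iic (-a)) = gaussianReal 0 v (Set.Ici a) := by
  have hmap := gaussianReal_map_const_mul (μ := 0) (v := v) (-1)
  have hv2 : (NNReal.mk (((-1:ℝ))^2) (sq_nonneg _) * v : NNReal) = v := by
    apply NNReal.eq; simp
  rw [hv2, mul_zero] at hmap
  conv_lhs => rw [← hmap]
  rw [Measure.map_apply (measurable_const_mul _) measurableSet_Iic]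
  congr 1
  ext x
  simp only [Set.mem_preimage, Set.mem_Iic, Set.mem_Ici]
  constructor <;> intro h <;> linarith

lemma aux_gauss_pos (a : ℝ) : 0 < gaussianReal 0 1 (Set.Ici a) := by
  rw [gaussianReal_apply_eq_integral 0 one_ne_zero]
  rw [ENNReal.ofReal_pos]
  rw [setIntegral_pos_iff_support_of_nonneg_ae
    (ae_of_all _ fun x => gaussianPDFReal_nonneg 0 1 x)
    (integrable_gaussianPDFReal 0 1).integrableOn]
  have hsupp : Function.support (gaussianPDFReal 0 1) = Set.univ := by
    ext x; simp [Function.mem_support, (gaussianPDFReal_pos 0 1 x one_ne_zero).ne']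
  rw [hsupp, Set.univ_inter, Real.volume_Ici]
  exact ENNReal.zero_lt_top

lemma aux_gauss_tail {b : ℝ} (hb : 1 ≤ b) :
    gaussianReal 0 1 (Set.Ici b) ≤ ENNReal.ofReal (Real.exp (-(b^2)/2)) := by
  have hb0 : (0:ℝ) < b := lt_of_lt_of_le one_pos hb
  rw [gaussianReal_apply_eq_integral 0 one_ne_zero]
  apply ENNReal.ofReal_le_ofReal
  have hgint : IntegrableOn (fun x => Real.exp (b^2/2) * Real.exp (-b * x)) (Set.Ici b) := by
    have h0 : IntegrableOn (fun x => Real.exp (b^2/2) * Real.exp (-b * x)) (Set.Ioi b) :=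
      (exp_neg_integrableOn_Ioi b hb0).const_mul _
    exact h0.congr_set_ae Ioi_ae_eq_Ici.symm
  have h1 : ∫ x in Set.Ici b, gaussianPDFReal 0 1 x
      ≤ ∫ x in Set.Ici b, Real.exp (b^2/2) * Real.exp (-b * x) := by
    refine setIntegral_mono_on (integrable_gaussianPDFReal 0 1).integrableOn hgint
      measurableSet_Ici ?_
    intro x hx
    have hx' : b ≤ x := hx
    rw [gaussianPDFReal_def]
    simp only
    have h2 : (Real.sqrt (2 * Real.pi * (1:NNReal)))⁻¹ ≤ 1 := by
      rw [inv_le_one_iff₀]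
      right
      rw [show ((1:NNReal):ℝ) = (1:ℝ) by norm_num, mul_one]
      rw [Real.one_le_sqrt]
      nlinarith [Real.pi_gt_three]
    have h3 : Real.exp (-(x - 0)^2 / (2 * (1:NNReal))) ≤ Real.exp (b^2/2) * Real.exp (-b * x) := by
      rw [← Real.exp_add]
      apply Real.exp_le_exp.2
      rw [show ((1:NNReal):ℝ) = (1:ℝ) by norm_num]
      nlinarith [sq_nonneg (x - b)]
    calc (Real.sqrt (2 * Real.pi * (1:NNReal)))⁻¹ * Real.exp (-(x - 0)^2 / (2 * (1:NNReal)))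
        ≤ 1 * Real.exp (-(x - 0)^2 / (2 * (1:NNReal))) := by
          apply mul_le_mul_of_nonneg_right h2 (Real.exp_nonneg _)
      _ = Real.exp (-(x - 0)^2 / (2 * (1:NNReal))) := one_mul _
      _ ≤ Real.exp (b^2/2) * Real.exp (-b * x) := h3
  refine h1.trans ?_
  rw [MeasureTheory.integral_const_mul, MeasureTheory.integral_Ici_eq_integral_Ioi]
  have h4 : ∫ x in Set.Ioi b, Real.exp (-b * x) = b⁻¹ * Real.exp (-(b*b)) := by
    have h5 := integral_comp_mul_left_Ioi (fun x => Real.exp (-x)) b hb0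
    simp only [smul_eq_mul] at h5
    rw [show (fun x => Real.exp (-b * x)) = (fun x => Real.exp (-(b * x))) by
      funext x; ring_nf]
    rw [h5, integral_exp_neg_Ioi]
  rw [h4]
  have h6 : Real.exp (b^2/2) * (b⁻¹ * Real.exp (-(b*b))) ≤ Real.exp (b^2/2) * Real.exp (-(b*b)) := by
    have : b⁻¹ * Real.exp (-(b*b)) ≤ 1 * Real.exp (-(b*b)) := by
      apply mul_le_mul_of_nonneg_right _ (Real.exp_nonneg _)
      exact inv_le_one_of_one_le₀ hb
    nlinarith [Real.exp_pos (b^2/2), Real.exp_nonneg (-(b*b))]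
  refine h6.trans ?_
  rw [← Real.exp_add]
  apply Real.exp_le_exp.2
  nlinarith

end Aux

/-- If X is continuous on [0,∞) and locally Hölder continuous with
exponent γ ∈ [1/2,1], and τ_r is the first hitting time of the curve X by a
Brownian motion started at r < X 0 (realized here as r + B with B started at 0),
then for every s > 0, P_r(τ_r > s) → 0 as r → X 0 from the left.  The event
{τ_r > s} is the event that r + B stays strictly below X on [0,s]. -/
theorem hitting_time_tendsto_zero_near_boundary {Ω : Type*} [MeasurableSpace Ω]
    (P : Measure Ω) (B : ℝ → Ω → ℝ) (hB : IsBrownianMotion P B)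
    (X : ℝ → ℝ) (γ : ℝ) (hγ : 1 / 2 ≤ γ ∧ γ ≤ 1)
    (hXcont : ContinuousOn X (Set.Ici 0))
    (hHolder : ∀ T > (0:ℝ), ∃ m : ℝ, ∀ s ∈ Set.Icc (0:ℝ) T, ∀ u ∈ Set.Icc (0:ℝ) T,
      |X u - X s| ≤ m * |u - s| ^ γ)
    (s : ℝ) (hs : 0 < s) :
    Filter.Tendsto (fun r => P {ω | ∀ u ∈ Set.Icc 0 s, r + B u ω < X u})
      (nhdsWithin (X 0) (Set.Iio (X 0))) (nhds 0) := by
  obtain ⟨hγ1, hγ2⟩ := hγ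
  haveI := hB.isProb
  obtain ⟨m, hm⟩ := hHolder s hs
  set c : ℝ := |m| + 1 with hc
  have hc1 : 1 ≤ c := by simp only [hc]; have := abs_nonneg m; linarith
  have hc0 : (0:ℝ) < c := lt_of_lt_of_le one_pos hc1
  clear_value c
  set t0 : ℝ := min s 1 with ht0
  have ht00 : 0 < t0 := lt_min hs one_pos
  clear_value t0
  set t : ℕ → ℝ := fun k => t0 / ((Nat.factorial (k+1) : ℝ))^2 with ht
  clear_value t
  have hfac : ∀ k : ℕ, (0:ℝ) < ((Nat.factorial (k+1) : ℝ))^2 := by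
    intro k
    have := Nat.factorial_pos (k+1)
    positivity
  have htpos : ∀ k, 0 < t k := by intro k; rw [ht]; exact div_pos ht00 (hfac k)
  have htrec : ∀ k, t k = ((k:ℝ)+2)^2 * t (k+1) := by
    intro k
    rw [ht]
    simp only
    rw [Nat.factorial_succ (k+1)]
    have h1 := (Nat.factorial_pos (k+1)).ne'
    push_cast
    field_simp
    ring
  have hfacge : ∀ k : ℕ, (1:ℝ) ≤ ((Nat.factorial (k+1) : ℝ))^2 := by
    intro k
    have h1 : 1 ≤ (Nat.factorial (k+1) : ℝ) := by
      exact_mod_cast Nat.one_le_iff_ne_zero.mpr (Nat.factorial_pos (k+1)).ne'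
    nlinarith
  have ht0le : ∀ k, t k ≤ t0 := by
    intro k
    rw [ht]
    simp only
    exact div_le_self ht00.le (hfacge k)
  have ht0s : t0 ≤ s := by rw [ht0]; exact min_le_left _ _
  have ht01 : t0 ≤ 1 := by rw [ht0]; exact min_le_right _ _
  have htIcc : ∀ k, t k ∈ Set.Icc 0 s :=
    fun k => ⟨(htpos k).le, le_trans (ht0le k) ht0s⟩
  have ht4 : ∀ k, 4 * t (k+1) ≤ t k := by
    intro k
    rw [htrec k]
    have h1 := (htpos (k+1)).le
    have h2 : (0:ℝ) ≤ (k:ℝ) := Nat.cast_nonneg k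
    have h3 : (4:ℝ) ≤ ((k:ℝ)+2)^2 := by nlinarith
    nlinarith [mul_le_mul_of_nonneg_right h3 h1]
  have htanti : Antitone t := antitone_nat_of_succ_le (fun k => by linarith [ht4 k, htpos (k+1)])
  set v : ℕ → ℝ := fun k => t k - t (k+1) with hv
  clear_value v
  have hvpos : ∀ k, 0 < v k := by
    intro k
    have := ht4 k
    have := htpos (k+1)
    simp only [hv]
    linarith
  have hv34 : ∀ k, (3/4) * t k ≤ v k := by
    intro k
    have := ht4 k
    simp only [hv]
    linarith
  have hsq : ∀ k, Real.sqrt (t k) = ((k:ℝ)+2) * Real.sqrt (t (k+1)) := by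
    intro k
    rw [htrec k, Real.sqrt_mul (sq_nonneg _), Real.sqrt_sq (by positivity)]
  have h23 : ∀ k, 2 * Real.sqrt (t k) ≤ 3 * Real.sqrt (v k) := by
    intro k
    have h1 : Real.sqrt ((4/9) * t k) ≤ Real.sqrt (v k) :=
      Real.sqrt_le_sqrt (by nlinarith [hv34 k, htpos k])
    have h2 : Real.sqrt ((4/9) * t k) = (2/3) * Real.sqrt (t k) := by
      rw [show (4/9 : ℝ) * t k = (2/3)^2 * t k by ring, Real.sqrt_mul (sq_nonneg _),
        Real.sqrt_sq (by norm_num)]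
    rw [h2] at h1
    linarith
  -- increments
  set Y : ℕ → Ω → ℝ := fun k ω => B (t k) ω - B (t (k+1)) ω with hY
  clear_value Y
  have hYmeas : ∀ k, Measurable (Y k) := by intro k; rw [hY]; exact (hB.meas _).sub (hB.meas _)
  have hYlaw : ∀ k, P.map (Y k) = gaussianReal 0 (Real.toNNReal (v k)) := by
    intro k
    have := hB.incr (t (k+1)) (t k) (htpos _).le (htanti (Nat.le_succ k))
    rw [hY, hv]
    exact this
  -- independence product formula
  have hprod : ∀ (S : Finset ℕ) (sets : ℕ → Set ℝ), (∀ k ∈ S, MeasurableSet (sets k)) →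
      P (⋂ k ∈ S, Y k ⁻¹' sets k) = ∏ k ∈ S, P (Y k ⁻¹' sets k) := by
    intro S sets hsets
    set N : ℕ := S.sup id with hNdef
    have hSsub : ∀ k ∈ S, k ≤ N := fun k hk => Finset.le_sup (f := id) hk
    set A : ℕ → Set ℝ := fun k => if k ∈ S then sets k else Set.univ with hA
    have hAmeas : ∀ k, MeasurableSet (A k) := by
      intro k
      by_cases h : k ∈ S <;> simp [hA, h]
      exact hsets k h
    set ts : Fin (N+2) → ℝ := fun i => t (N+1 - (i:ℕ)) with hts
    have hmono : Monotone ts := by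
      intro i j hij
      exact htanti (Nat.sub_le_sub_left hij (N+1))
    have hpos : ∀ i, 0 ≤ ts i := fun i => (htpos _).le
    have hindep := hB.indep (N+1) ts hmono hpos
    have hident : ∀ i : Fin (N+1),
        (fun ω => B (ts i.succ) ω - B (ts i.castSucc) ω) = Y (N - (i:ℕ)) := by
      intro i
      have hiN : (i:ℕ) ≤ N := Nat.lt_succ_iff.mp i.isLt
      have h1 : ts i.succ = t (N - (i:ℕ)) := by
        simp only [hts, Fin.val_succ]
        congr 1
        omega
      have h2 : ts i.castSucc = t ((N - (i:ℕ)) + 1) := by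
        simp only [hts, Fin.coe_castSucc]
        congr 1
        omega
      rw [h1, h2, hY]
    have hform := hindep.measure_inter_preimage_eq_mul Finset.univ
      (sets := fun i : Fin (N+1) => A (N - (i:ℕ))) (fun i _ => hAmeas _)
    simp only [hident] at hform
    have hset : (⋂ i ∈ Finset.univ, Y (N - ((i : Fin (N+1)):ℕ)) ⁻¹' A (N - (i:ℕ)))
        = ⋂ k ∈ S, Y k ⁻¹' sets k := by
      ext ω
      simp only [Set.mem_iInter, Finset.mem_univ, forall_const, Set.mem_preimage]
      constructor
      · intro h k hk
        have hkN : k ≤ N := hSsub k hk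
        have := h ⟨N - k, by omega⟩
        rw [show N - (N - k) = k by omega] at this
        simpa [hA, hk] using this
      · intro h i
        by_cases hmem : (N - (i:ℕ)) ∈ S
        · have := h _ hmem
          simpa [hA, hmem] using this
        · simp [hA, hmem]
    have hprodeq : (∏ i : Fin (N+1), P (Y (N - (i:ℕ)) ⁻¹' A (N - (i:ℕ))))
        = ∏ k ∈ S, P (Y k ⁻¹' sets k) := by
      rw [Fin.prod_univ_eq_prod_range (fun j => P (Y (N - j) ⁻¹' A (N - j))) (N+1)]
      have hrefl := Finset.prod_range_reflect (fun j => P (Y j ⁻¹' A j)) (N+1)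
      simp only [Nat.add_sub_cancel] at hrefl
      rw [hrefl]
      calc ∏ j ∈ Finset.range (N+1), P (Y j ⁻¹' A j)
          = ∏ k ∈ S, P (Y k ⁻¹' A k) :=
            (Finset.prod_subset
              (fun k hk => Finset.mem_range.mpr (Nat.lt_succ_of_le (hSsub k hk)))
              (fun k _ hnk => by simp [hA, hnk])).symm
        _ = ∏ k ∈ S, P (Y k ⁻¹' sets k) :=
            Finset.prod_congr rfl (fun k hk => by simp [hA, hk])
    rw [← hset, ← hprodeq]
    exact hform
  -- the events
  set q : ENNReal := gaussianReal 0 1 (Set.Ici (3*c)) with hq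
  clear_value q
  have hqpos : 0 < q := by rw [hq]; exact aux_gauss_pos _
  set D : ℕ → Set Ω := fun k => Y k ⁻¹' Set.Ici (3*c*Real.sqrt (v k)) with hD
  clear_value D
  have hDmeas : ∀ k, MeasurableSet (D k) := by
    intro k; rw [hD]; exact (hYmeas k) measurableSet_Ici
  have hDprob : ∀ k, P (D k) = q := by
    intro k
    have hvne : Real.toNNReal (v k) ≠ 0 := by
      simp [Real.toNNReal_eq_zero, not_le, hvpos k]
    rw [hD]
    simp only
    rw [← Measure.map_apply (hYmeas k) measurableSet_Ici, hYlaw k,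
      aux_gauss_scale _ hvne]
    have hcoe : ((Real.toNNReal (v k) : NNReal) : ℝ) = v k := Real.coe_toNNReal _ (hvpos k).le
    rw [hq]
    congr 1
    rw [hcoe, mul_div_assoc, div_self (Real.sqrt_pos.2 (hvpos k)).ne', mul_one]
  have hDindep : iIndepSet D P := by
    refine (iIndepSet_iff_meas_biInter hDmeas).2 (fun S => ?_)
    simp only [hD]
    exact hprod S (fun k => Set.Ici (3*c*Real.sqrt (v k))) (fun k _ => measurableSet_Ici)
  have hDsum : (∑' k, P (D k)) = ⊤ := by
    simp only [hDprob]
    exact ENNReal.tsum_const_eq_top_of_ne_zero hqpos.ne'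
  have hD1 : P (Filter.limsup D Filter.atTop) = 1 :=
    ProbabilityTheory.measure_limsup_eq_one hDmeas hDindep hDsum
  -- the F events
  set F : ℕ → Set Ω := fun k => (B (t (k+1))) ⁻¹' {x : ℝ | c * Real.sqrt (t k) ≤ |x|} with hF
  clear_value F
  have habs : ∀ a : ℝ, MeasurableSet {x : ℝ | a ≤ |x|} :=
    fun a => measurableSet_le measurable_const measurable_abs
  have hFbound : ∀ k, P (F k) ≤ ENNReal.ofReal (2 * Real.exp (-(k:ℝ))) := by
    intro k
    have hBlaw : P.map (B (t (k+1))) = gaussianReal 0 (Real.toNNReal (t (k+1))) := by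
      have h0 := hB.incr 0 (t (k+1)) le_rfl (htpos _).le
      rw [sub_zero] at h0
      rw [← h0]
      apply Measure.map_congr
      filter_upwards [hB.start] with ω hω
      simp [hω]
    have hvne : Real.toNNReal (t (k+1)) ≠ 0 := by
      simp [Real.toNNReal_eq_zero, not_le, htpos (k+1)]
    have key : P (F k) = gaussianReal 0 (Real.toNNReal (t (k+1)))
        {x : ℝ | c * Real.sqrt (t k) ≤ |x|} := by
      rw [hF]
      simp only
      rw [← Measure.map_apply (hB.meas _) (habs _), hBlaw]
    rw [key]
    have hsub : {x : ℝ | c * Real.sqrt (t k) ≤ |x|} ⊆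
        Set.Ici (c * Real.sqrt (t k)) ∪ Set.Iic (-(c * Real.sqrt (t k))) := by
      intro x hx
      have hx' : c * Real.sqrt (t k) ≤ |x| := hx
      rcases le_abs.mp hx' with h | h
      · exact Or.inl h
      · exact Or.inr (by simp only [Set.mem_Iic]; linarith)
    have hone : gaussianReal 0 (Real.toNNReal (t (k+1))) (Set.Ici (c * Real.sqrt (t k)))
        ≤ ENNReal.ofReal (Real.exp (-(k:ℝ))) := by
      rw [aux_gauss_scale _ hvne]
      have hcoe : ((Real.toNNReal (t (k+1)) : NNReal) : ℝ) = t (k+1) :=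
        Real.coe_toNNReal _ (htpos (k+1)).le
      rw [hcoe]
      have hne : Real.sqrt (t (k+1)) ≠ 0 := (Real.sqrt_pos.2 (htpos (k+1))).ne'
      have hb : c * Real.sqrt (t k) / Real.sqrt (t (k+1)) = c * ((k:ℝ)+2) := by
        rw [hsq k]
        field_simp
      rw [hb]
      have hk0 : (0:ℝ) ≤ (k:ℝ) := Nat.cast_nonneg k
      have hb1 : (1:ℝ) ≤ c * ((k:ℝ)+2) := by nlinarith
      refine (aux_gauss_tail hb1).trans ?_
      apply ENNReal.ofReal_le_ofReal
      apply Real.exp_le_exp.2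
      have h2 : ((k:ℝ)+2) ≤ c*((k:ℝ)+2) := le_mul_of_one_le_left (by linarith) hc1
      have h3 : ((k:ℝ)+2)*((k:ℝ)+2) ≤ (c*((k:ℝ)+2))*(c*((k:ℝ)+2)) :=
        mul_le_mul h2 h2 (by linarith) (by positivity)
      have h4 : (c*((k:ℝ)+2))^2 = (c*((k:ℝ)+2))*(c*((k:ℝ)+2)) := by ring
      have h5 : 2*(k:ℝ) ≤ (c*((k:ℝ)+2))*(c*((k:ℝ)+2)) := by nlinarith [h3, hk0]
      show -(c * ((k:ℝ)+2))^2/2 ≤ -(k:ℝ)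
      linarith [h4, h5]
    calc gaussianReal 0 (Real.toNNReal (t (k+1))) {x : ℝ | c * Real.sqrt (t k) ≤ |x|}
        ≤ gaussianReal 0 (Real.toNNReal (t (k+1)))
            (Set.Ici (c * Real.sqrt (t k)) ∪ Set.Iic (-(c * Real.sqrt (t k)))) :=
          measure_mono hsub
      _ ≤ gaussianReal 0 (Real.toNNReal (t (k+1))) (Set.Ici (c * Real.sqrt (t k)))
            + gaussianReal 0 (Real.toNNReal (t (k+1))) (Set.Iic (-(c * Real.sqrt (t k)))) :=
          measure_union_le _ _
      _ = gaussianReal 0 (Real.toNNReal (t (k+1))) (Set.Ici (c * Real.sqrt (t k)))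
            + gaussianReal 0 (Real.toNNReal (t (k+1))) (Set.Ici (c * Real.sqrt (t k))) := by
          rw [aux_gauss_neg]
      _ ≤ ENNReal.ofReal (Real.exp (-(k:ℝ))) + ENNReal.ofReal (Real.exp (-(k:ℝ))) :=
          add_le_add hone hone
      _ = ENNReal.ofReal (2 * Real.exp (-(k:ℝ))) := by
          rw [two_mul, ENNReal.ofReal_add (Real.exp_nonneg _) (Real.exp_nonneg _)]
  have hFsum : (∑' k, P (F k)) ≠ ⊤ := by
    refine ne_top_of_le_ne_top ?_ (ENNReal.tsum_le_tsum hFbound)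
    rw [← ENNReal.ofReal_tsum_of_nonneg (fun n => by positivity)
      (Real.summable_exp_neg_nat.mul_left 2)]
    exact ENNReal.ofReal_ne_top
  have hF0 : P (Filter.limsup F Filter.atTop) = 0 :=
    MeasureTheory.measure_limsup_atTop_eq_zero hFsum
  -- a.e. some B (t k) exceeds c √(t k)
  have hae : ∀ᵐ ω ∂P, ∃ k, c * Real.sqrt (t k) < B (t k) ω := by
    have h1 : ∀ᵐ ω ∂P, ω ∈ Filter.limsup D Filter.atTop := by
      have hcompl : P (Filter.limsup D Filter.atTop)ᶜ = 0 := by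
        rw [prob_compl_eq_zero_iff (MeasurableSet.measurableSet_limsup hDmeas)]
        exact hD1
      rw [ae_iff]
      convert hcompl using 2
      rfl
    have h2 : ∀ᵐ ω ∂P, ω ∉ Filter.limsup F Filter.atTop := measure_eq_zero_iff_ae_notMem.1 hF0
    filter_upwards [h1, h2] with ω hω1 hω2
    rw [Filter.mem_limsup_iff_frequently_mem] at hω1
    rw [Filter.mem_limsup_iff_frequently_mem, Filter.not_frequently] at hω2
    obtain ⟨k, hk1, hk2⟩ := (hω1.and_eventually hω2).exists
    refine ⟨k, ?_⟩
    rw [hD] at hk1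
    rw [hF] at hk2
    simp only [Set.mem_preimage, Set.mem_Ici] at hk1
    simp only [Set.mem_preimage, Set.mem_setOf_eq, not_le] at hk2
    have e3 : -(c*Real.sqrt (t k)) < B (t (k+1)) ω := neg_lt_of_abs_lt hk2
    have e4 : c * (2*Real.sqrt (t k)) ≤ c * (3*Real.sqrt (v k)) :=
      mul_le_mul_of_nonneg_left (h23 k) hc0.le
    have e5 : Y k ω = B (t k) ω - B (t (k+1)) ω := by rw [hY]
    nlinarith
  -- a.e. the curve is crossed
  have haeX : ∀ᵐ ω ∂P, ∃ k, X (t k) < X 0 + B (t k) ω := by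
    filter_upwards [hae] with ω hk
    obtain ⟨k, hk⟩ := hk
    refine ⟨k, ?_⟩
    have hXb : X (t k) - X 0 ≤ c * Real.sqrt (t k) := by
      have h1 := hm 0 ⟨le_rfl, hs.le⟩ (t k) (htIcc k)
      rw [sub_zero, abs_of_nonneg (htpos k).le] at h1
      have h3 : (t k) ^ γ ≤ (t k) ^ ((1:ℝ)/2) :=
        Real.rpow_le_rpow_of_exponent_ge (htpos k)
          (le_trans (ht0le k) ht01) hγ1
      have h4 : (t k) ^ ((1:ℝ)/2) = Real.sqrt (t k) := (Real.sqrt_eq_rpow _).symm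
      have h5 : (0:ℝ) ≤ (t k) ^ γ := Real.rpow_nonneg (htpos k).le γ
      calc X (t k) - X 0 ≤ |X (t k) - X 0| := le_abs_self _
        _ ≤ m * (t k)^γ := h1
        _ ≤ |m| * (t k)^γ := mul_le_mul_of_nonneg_right (le_abs_self m) h5
        _ ≤ |m| * Real.sqrt (t k) := by
            apply mul_le_mul_of_nonneg_left _ (abs_nonneg m)
            rw [← h4]; exact h3
        _ ≤ c * Real.sqrt (t k) := by
            apply mul_le_mul_of_nonneg_right _ (Real.sqrt_nonneg _)
            rw [hc]; linarith
    linarith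
  -- topological part
  set Dset : Set ℝ := (Set.Icc 0 s ∩ Set.range ((↑) : ℚ → ℝ)) ∪ {s} with hDset
  have hDcount : Dset.Countable := by
    rw [hDset]
    exact ((Set.countable_range _).mono Set.inter_subset_right).union (Set.countable_singleton s)
  have hDsubIcc : Dset ⊆ Set.Icc 0 s := by
    rw [hDset]
    rintro x (⟨hx, -⟩ | hx)
    · exact hx
    · rcases hx with rfl
      exact ⟨hs.le, le_rfl⟩
  have hsD : s ∈ Dset := by rw [hDset]; exact Or.inr rfl
  have hclos : ∀ u ∈ Set.Icc 0 s, u ∈ closure Dset := by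
    intro u hu
    rcases eq_or_lt_of_le hu.2 with he | hlt
    · rw [he]; exact subset_closure hsD
    · rw [Metric.mem_closure_iff]
      intro ε hε
      have h1 : u < min (u + ε) s := lt_min (by linarith) hlt
      obtain ⟨qr, hq1, hq2⟩ := exists_rat_btwn h1
      refine ⟨(qr:ℝ), ?_, ?_⟩
      · rw [hDset]
        left
        exact ⟨⟨le_trans hu.1 (le_of_lt hq1), le_of_lt (lt_of_lt_of_le hq2 (min_le_right _ _))⟩,
          ⟨qr, rfl⟩⟩
      · rw [Real.dist_eq, abs_lt]
        have := lt_of_lt_of_le hq2 (min_le_left _ _)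
        constructor <;> linarith
  set G : ℝ → Set Ω := fun r => ⋃ n : ℕ, ⋂ q ∈ Dset, {ω | r + B q ω ≤ X q - 1/((n:ℝ)+1)}
    with hG
  have hGmeas : ∀ r, MeasurableSet (G r) := by
    intro r
    rw [hG]
    refine MeasurableSet.iUnion (fun n => ?_)
    refine MeasurableSet.biInter hDcount (fun q _ => ?_)
    exact measurableSet_le (measurable_const.add (hB.meas q)) measurable_const
  have hGanti : ∀ r r' : ℝ, r ≤ r' → G r' ⊆ G r := by
    intro r r' hrr ω hω
    rw [hG] at hω ⊢
    obtain ⟨n, hn⟩ := Set.mem_iUnion.mp hω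
    refine Set.mem_iUnion.mpr ⟨n, ?_⟩
    simp only [Set.mem_iInter, Set.mem_setOf_eq] at hn ⊢
    intro q hq
    have := hn q hq
    linarith
  have hGiff : ∀ r ω, Continuous (fun u => B u ω) →
      (ω ∈ G r ↔ ∀ u ∈ Set.Icc 0 s, r + B u ω < X u) := by
    intro r ω hcont
    constructor
    · intro hω u hu
      rw [hG] at hω
      obtain ⟨n, hn⟩ := Set.mem_iUnion.mp hω
      simp only [Set.mem_iInter, Set.mem_setOf_eq] at hn
      have hucl := hclos u hu
      haveI hne : (nhdsWithin u Dset).NeBot := mem_closure_iff_nhdsWithin_neBot.mp hucl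
      have htendB : Filter.Tendsto (fun x => r + B x ω) (nhdsWithin u Dset)
          (nhds (r + B u ω)) :=
        ((continuous_const.add hcont).tendsto u).mono_left nhdsWithin_le_nhds
      have htendX : Filter.Tendsto X (nhdsWithin u Dset) (nhds (X u)) := by
        have h1 : ContinuousWithinAt X (Set.Ici 0) u := hXcont u hu.1
        exact h1.tendsto.mono_left (nhdsWithin_mono u (fun x hx => (hDsubIcc hx).1))
      have hlim : Filter.Tendsto (fun x => r + B x ω - X x) (nhdsWithin u Dset)
          (nhds (r + B u ω - X u)) := htendB.sub htendX
      have hle : r + B u ω - X u ≤ -(1/((n:ℝ)+1)) := by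
        refine le_of_tendsto hlim ?_
        filter_upwards [self_mem_nhdsWithin] with x hx
        have := hn x hx
        linarith
      have hpos' : (0:ℝ) < 1/((n:ℝ)+1) := by positivity
      linarith
    · intro hω
      have hXcIcc : ContinuousOn X (Set.Icc 0 s) := hXcont.mono (fun x hx => hx.1)
      have hgcont : ContinuousOn (fun u => r + B u ω - X u) (Set.Icc 0 s) :=
        ((continuous_const.add hcont).continuousOn).sub hXcIcc
      obtain ⟨u0, hu0, hmax⟩ :=
        isCompact_Icc.exists_isMaxOn (Set.nonempty_Icc.mpr hs.le) hgcont
      have hneg : r + B u0 ω - X u0 < 0 := by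
        have := hω u0 hu0
        linarith
      obtain ⟨n, hn⟩ := exists_nat_one_div_lt (neg_pos.mpr hneg)
      rw [hG]
      refine Set.mem_iUnion.mpr ⟨n, ?_⟩
      simp only [Set.mem_iInter, Set.mem_setOf_eq]
      intro q hq
      have h1 : r + B q ω - X q ≤ r + B u0 ω - X u0 := isMaxOn_iff.mp hmax q (hDsubIcc hq)
      linarith
  have hEG : ∀ r, P {ω | ∀ u ∈ Set.Icc 0 s, r + B u ω < X u} = P (G r) := by
    intro r
    apply measure_congr
    rw [Filter.eventuallyEq_set]
    filter_upwards [hB.cont] with ω hcont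
    exact (hGiff r ω hcont).symm
  set R : ℕ → ℝ := fun n => X 0 - 1/((n:ℝ)+1) with hR
  have hRmono : Monotone R := by
    intro a b hab
    rw [hR]
    simp only
    have h1 : ((a:ℝ)+1) ≤ ((b:ℝ)+1) := by
      have : (a:ℝ) ≤ (b:ℝ) := Nat.cast_le.mpr hab
      linarith
    have h2 : 1/((b:ℝ)+1) ≤ 1/((a:ℝ)+1) := one_div_le_one_div_of_le (by positivity) h1
    linarith
  have hRlt : ∀ n, R n < X 0 := by
    intro n
    rw [hR]
    simp only
    have : (0:ℝ) < 1/((n:ℝ)+1) := by positivity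
    linarith
  have hGR0 : P (⋂ n, G (R n)) = 0 := by
    rw [measure_eq_zero_iff_ae_notMem]
    filter_upwards [hB.cont, haeX] with ω hcont hX
    obtain ⟨k, hk⟩ := hX
    intro hmem
    have hall : ∀ n : ℕ, R n + B (t k) ω < X (t k) := by
      intro n
      exact (hGiff (R n) ω hcont).mp (Set.mem_iInter.mp hmem n) (t k) (htIcc k)
    obtain ⟨n, hn⟩ := exists_nat_one_div_lt
      (show (0:ℝ) < X 0 + B (t k) ω - X (t k) by linarith)
    have h2 := hall n
    rw [hR] at h2
    simp only at h2
    linarith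
  have htendG : Filter.Tendsto (fun n => P (G (R n))) Filter.atTop (nhds 0) := by
    have h1 := tendsto_measure_iInter_atTop (μ := P) (s := fun n => G (R n))
      (fun n => (hGmeas _).nullMeasurableSet)
      (fun a b hab => hGanti _ _ (hRmono hab))
      ⟨0, measure_ne_top P _⟩
    rw [hGR0] at h1
    exact h1
  rw [ENNReal.tendsto_nhds_zero]
  intro ε hε
  obtain ⟨n, hn⟩ := (ENNReal.tendsto_nhds_zero.mp htendG ε hε).exists
  have hmemnhds : Set.Ioo (R n) (X 0) ∈ nhdsWithin (X 0) (Set.Iio (X 0)) :=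
    Ioo_mem_nhdsLT_of_mem ⟨hRlt n, le_rfl⟩
  filter_upwards [hmemnhds] with r hr
  calc P {ω | ∀ u ∈ Set.Icc 0 s, r + B u ω < X u} = P (G r) := hEG r
    _ ≤ P (G (R n)) := measure_mono (hGanti _ _ hr.1.le)
    _ ≤ ε := hn
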